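/- Let a, c be complex numbers with a ≠ c, let α = (α_i)_{i≥0} and β = (β_j)_{j≥0} be the sequences with α_i = (2^i - 1)a + c and β_j = (2^j - 1)a + c. Then for every positive integer n, det(P_{α,β}(n)) = [c + a(n-1)]·(c - a)^{n-1}. -/

import Mathlib

open Matrix

/-- Entry `P_{i,j}` of the generalized Pascal triangle associated to sequences `α`, `β`:
`P_{i,0} = α i`, `P_{0,j} = β j`, and `P_{i,j} = P_{i-1,j} + P_{i,j-1}` for `i, j ≥ 1`. -/
def pascalEntry {R : Type*} [CommRing R] (α β : ℕ → R) : ℕ → ℕ → R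
  | i, 0 => α i
  | 0, j + 1 => β (j + 1)
  | i + 1, j + 1 => pascalEntry α β i (j + 1) + pascalEntry α β (i + 1) j

/-- The generalized Pascal triangle `P_{α,β}(n)`. -/
def genPascal {R : Type*} [CommRing R] (α β : ℕ → R) (n : ℕ) :
    Matrix (Fin n) (Fin n) R :=
  Matrix.of fun i j => pascalEntry α β (i : ℕ) (j : ℕ)

/-- The Töplitz matrix `T_{α,β}(n)`: `t_{i,j} = α_{i-j}` if `i ≥ j`, else `β_{j-i}`. -/
def toeplitz {R : Type*} [CommRing R] (α β : ℕ → R) (n : ℕ) :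
    Matrix (Fin n) (Fin n) R :=
  Matrix.of fun i j => if (j : ℕ) ≤ (i : ℕ) then α ((i : ℕ) - (j : ℕ)) else β ((j : ℕ) - (i : ℕ))

/-- The unipotent lower triangular matrix `L(n)` with `L_{i,j} = C(i,j)` for `i ≥ j`. -/
def lowerL (R : Type*) [CommRing R] (n : ℕ) : Matrix (Fin n) (Fin n) R :=
  Matrix.of fun i j => if (j : ℕ) ≤ (i : ℕ) then ((i : ℕ).choose (j : ℕ) : R) else 0

/-- The binomial inverse transform `α̂_i = ∑_{k=0}^{i} (-1)^{i+k} C(i,k) α_k`. -/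
def hatSeq {R : Type*} [CommRing R] (α : ℕ → R) (i : ℕ) : R :=
  ∑ k ∈ Finset.range (i + 1), (-1 : R) ^ (i + k) * (i.choose k : R) * α k

/-- The binomial transform `α̌_i = ∑_{k=0}^{i} C(i,k) α_k`. -/
def checkSeq {R : Type*} [CommRing R] (α : ℕ → R) (i : ℕ) : R :=
  ∑ k ∈ Finset.range (i + 1), (i.choose k : R) * α k

lemma pascalEntry_formula (a c : ℂ) : ∀ i j : ℕ,
    pascalEntry (fun i => ((2:ℂ)^i - 1)*a + c) (fun j => ((2:ℂ)^j - 1)*a + c) i j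
      = a * 2^(i+j) + (c - a) * ((i+j).choose i : ℂ) := by
  intro i
  induction i with
  | zero =>
    intro j
    cases j with
    | zero => simp [pascalEntry]
    | succ j => simp [pascalEntry]; ring
  | succ i ih =>
    intro j
    induction j with
    | zero => simp [pascalEntry]; ring
    | succ j ihj =>
      rw [pascalEntry, ih, ihj]
      have hch : ((i+1)+(j+1)).choose (i+1) = (i+(j+1)).choose i + ((i+1)+j).choose (i+1) := by
        have : (i+1)+(j+1) = (i + (j+1)) + 1 := by omega
        rw [this, Nat.choose_succ_succ]
        congr 2
        omega
      rw [hch]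
      push_cast
      have : (i+1)+(j+1) = (i + (j+1)) + 1 := by omega
      rw [this]
      ring

lemma sum_choose_mul (n i j : ℕ) (hi : i < n) :
    ∑ k ∈ Finset.range n, i.choose k * j.choose k = (i + j).choose i := by
  rw [Nat.add_choose_eq, Finset.Nat.sum_antidiagonal_eq_sum_range_succ_mk]
  have h1 : ∑ k ∈ Finset.range (i+1), i.choose k * j.choose (i - k)
      = ∑ k ∈ Finset.range (i+1), i.choose k * j.choose k := by
    rw [← Finset.sum_range_reflect]
    refine Finset.sum_congr rfl fun k hk => ?_
    have hk' : k ≤ i := by simpa [Nat.lt_succ_iff] using hk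
    rw [show i + 1 - 1 - k = i - k from by omega, Nat.choose_symm hk', Nat.sub_sub_self hk']
  rw [h1]
  symm
  apply Finset.sum_subset
  · exact Finset.range_subset_range.2 hi
  · intro k _ hk
    have : i < k := by simpa [Nat.lt_succ_iff] using hk
    simp [Nat.choose_eq_zero_of_lt this]

lemma sum_choose' (n i : ℕ) (hi : i < n) :
    ∑ k ∈ Finset.range n, i.choose k = 2 ^ i := by
  rw [← Nat.sum_range_choose i]
  symm
  apply Finset.sum_subset (Finset.range_subset_range.2 hi)
  intro k _ hk
  exact Nat.choose_eq_zero_of_lt (by simpa [Nat.lt_succ_iff] using hk)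

lemma lowerL_apply (n : ℕ) (i j : Fin n) :
    lowerL ℂ n i j = ((i : ℕ).choose (j : ℕ) : ℂ) := by
  by_cases h : (j : ℕ) ≤ (i : ℕ)
  · simp only [lowerL, Matrix.of_apply, if_pos h]
  · simp only [lowerL, Matrix.of_apply, if_neg h,
      Nat.choose_eq_zero_of_lt (lt_of_not_ge h), Nat.cast_zero]

lemma det_lowerL (n : ℕ) : (lowerL ℂ n).det = 1 := by
  rw [Matrix.det_of_lowerTriangular (lowerL ℂ n)]
  · simp [lowerL]
  · intro i j hij
    have hij' : (i : ℕ) < (j : ℕ) := hij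
    simp only [lowerL, Matrix.of_apply, if_neg (not_le.2 hij')]

/-- for `α_i = (2^i - 1)a + c = β_i` with `a ≠ c`,
`det(P_{α,β}(n)) = (c + a(n-1))(c - a)^{n-1}`. -/
theorem det_genPascal_two_pow_eq (a c : ℂ) (h : a ≠ c) (n : ℕ) (hn : 0 < n) :
    (genPascal (fun i => ((2 : ℂ) ^ i - 1) * a + c)
        (fun j => ((2 : ℂ) ^ j - 1) * a + c) n).det =
      (c + a * ((n : ℂ) - 1)) * (c - a) ^ (n - 1) := by
  have hca : c - a ≠ 0 := sub_ne_zero.2 (Ne.symm h)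
  set D : Matrix (Fin n) (Fin n) ℂ :=
    Matrix.of (fun k l => (if k = l then c - a else 0) + a) with hD
  -- row sums of lowerL
  have hrow : ∀ i : Fin n, ∑ k : Fin n, lowerL ℂ n i k = (2:ℂ)^(i:ℕ) := by
    intro i
    simp only [lowerL_apply]
    rw [Fin.sum_univ_eq_sum_range (fun k => (((i:ℕ).choose k : ℕ) : ℂ)), ← Nat.cast_sum,
      sum_choose' n i i.isLt]
    push_cast
    ring
  have hLL : ∀ i j : Fin n, ∑ k : Fin n, lowerL ℂ n i k * lowerL ℂ n j k
      = ((((i:ℕ)+(j:ℕ)).choose (i:ℕ) : ℕ) : ℂ) := by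
    intro i j
    simp only [lowerL_apply]
    rw [Fin.sum_univ_eq_sum_range (fun k => (((i:ℕ).choose k : ℕ) : ℂ) * (((j:ℕ).choose k : ℕ) : ℂ)),
      ← sum_choose_mul n i j i.isLt, Nat.cast_sum]
    push_cast
    rfl
  -- factorization
  have hfac : genPascal (fun i => ((2 : ℂ) ^ i - 1) * a + c)
      (fun j => ((2 : ℂ) ^ j - 1) * a + c) n = lowerL ℂ n * D * (lowerL ℂ n)ᵀ := by
    ext i j
    have hLD : ∀ l : Fin n, (lowerL ℂ n * D) i l
        = (c-a) * lowerL ℂ n i l + a * 2^(i:ℕ) := by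
      intro l
      rw [Matrix.mul_apply]
      simp only [hD, Matrix.of_apply, mul_add, mul_ite, mul_zero, Finset.sum_add_distrib,
        Finset.sum_ite_eq', Finset.mem_univ, if_true, ← Finset.sum_mul, hrow i]
      ring
    rw [Matrix.mul_apply]
    simp only [hLD, Matrix.transpose_apply, add_mul, Finset.sum_add_distrib]
    have e1 : ∑ x : Fin n, (c-a) * lowerL ℂ n i x * lowerL ℂ n j x
        = (c-a) * ((((i:ℕ)+(j:ℕ)).choose (i:ℕ) : ℕ) : ℂ) := by
      rw [← hLL i j, Finset.mul_sum]
      exact Finset.sum_congr rfl fun x _ => by ring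
    have e2 : ∑ x : Fin n, a * 2^(i:ℕ) * lowerL ℂ n j x = a * 2^(i:ℕ) * (2:ℂ)^(j:ℕ) := by
      rw [← Finset.mul_sum, hrow j]
    rw [e1, e2]
    simp only [genPascal, Matrix.of_apply, pascalEntry_formula a c (i:ℕ) (j:ℕ)]
    ring
  rw [hfac, Matrix.det_mul, Matrix.det_mul, det_lowerL, Matrix.det_transpose, det_lowerL,
    one_mul, mul_one]
  -- determinant of D
  have hD2 : D = (c - a) • (1 + Matrix.replicateCol Unit (fun _ => a/(c-a)) * Matrix.replicateRow Unit (fun _ => (1:ℂ))) := by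
    ext k l
    simp only [hD, Matrix.of_apply, Matrix.smul_apply, Matrix.add_apply, Matrix.mul_apply,
      Matrix.replicateCol_apply, Matrix.replicateRow_apply, Matrix.one_apply, Finset.sum_const, Finset.card_univ,
      Fintype.card_unit, one_smul, smul_eq_mul]
    by_cases hkl : k = l <;> simp [hkl] <;> field_simp <;> ring
  rw [hD2, Matrix.det_smul, Matrix.det_one_add_replicateCol_mul_replicateRow]
  simp only [dotProduct, Finset.sum_const, Finset.card_univ, Fintype.card_fin, smul_eq_mul,
    one_mul, smul_eq_mul]
  obtain ⟨m, rfl⟩ : ∃ m, n = m + 1 := ⟨n - 1, by omega⟩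
  simp only [Nat.add_sub_cancel]
  field_simp
  rw [nsmul_eq_mul, pow_succ]
  field_simp
  push_cast
  ring
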